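/- arXiv:2012.07069 — 3 statements merged into one kernel-verified Lean document; each statement's English description precedes it below -/
import Mathlib

section
/- Let {|v_x⟩}_{x=0}^{d-1} be an orthonormal basis of ℂ^d satisfying |⟨j|v_i⟩| = 1/d for i = j and |⟨j|v_i⟩| = √(d+1)/d for i ≠ j (with |j⟩ the standard basis). Define |η_x^a⟩ = Z^a|v_x⟩ for a = 0,...,d-1 and |η_x^d⟩ = |x⟩, and set M_x^a = (d/(d+1))|η_x^a⟩⟨η_x^a|. Then for each x, {M_x^a}_{a=0}^{d} is a valid POVM: each M_x^a is positive semidefinite and ∑_{a=0}^{d} M_x^a = 𝟙. -/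
open Matrix Complex BigOperators
open scoped ComplexOrder

noncomputable section

/-- The clock matrix `Z = ∑ᵢ ωⁱ |i⟩⟨i|` with `ω = exp(2πi/d)`. -/
def clockZ (d : ℕ) : Matrix (Fin d) (Fin d) ℂ :=
  Matrix.diagonal fun i => Complex.exp (2 * Real.pi * Complex.I / d) ^ (i : ℕ)

/-- The standard basis vector `|x⟩`. -/
def ket (d : ℕ) (x : Fin d) : Fin d → ℂ := fun j => if j = x then 1 else 0

/-- The vectors `|η_x^a⟩ = Zᵃ|v_x⟩` for `a < d` and `|η_x^d⟩ = |x⟩`. -/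
def eta (d : ℕ) (v : Fin d → Fin d → ℂ) (x : Fin d) (a : Fin (d + 1)) :
    Fin d → ℂ :=
  if a.val < d then (clockZ d ^ (a : ℕ)) *ᵥ v x else ket d x

/-- The `(d+1)`-outcome POVM elements `M_x^a = (d/(d+1))|η_x^a⟩⟨η_x^a|`. -/
def povmM (d : ℕ) (v : Fin d → Fin d → ℂ) (x : Fin d) (a : Fin (d + 1)) :
    Matrix (Fin d) (Fin d) ℂ :=
  ((d : ℂ) / (d + 1)) • vecMulVec (eta d v x a) (star (eta d v x a))

lemma aux_psd_smul {n : ℕ} (c : ℂ) (hc : 0 ≤ c) {M : Matrix (Fin n) (Fin n) ℂ}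
    (hM : M.PosSemidef) : (c • M).PosSemidef := by
  have hcs : star c = c := by
    rw [Complex.star_def, Complex.conj_eq_iff_im]
    exact ((Complex.le_def.mp hc).2).symm
  refine posSemidef_iff_dotProduct_mulVec.mpr ⟨?_, fun y => ?_⟩
  · unfold Matrix.IsHermitian
    rw [conjTranspose_smul, hM.1.eq, hcs]
  · rw [smul_mulVec, dotProduct_smul, smul_eq_mul]
    exact mul_nonneg hc (hM.dotProduct_mulVec_nonneg y)

lemma aux_root_sum (d : ℕ) (hd : d ≠ 0) (j k : Fin d) :
    (∑ a : Fin d,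
        (Complex.exp (2 * Real.pi * Complex.I / d) ^ (j : ℕ) *
          (star (Complex.exp (2 * Real.pi * Complex.I / d))) ^ (k : ℕ)) ^ (a : ℕ)) =
      if j = k then (d : ℂ) else 0 := by
  set ω := Complex.exp (2 * Real.pi * Complex.I / d) with hωdef
  have hω0 : ω ≠ 0 := Complex.exp_ne_zero _
  have hstar : star ω = ω⁻¹ := by
    rw [hωdef, Complex.star_def, ← Complex.exp_conj, ← Complex.exp_neg]
    congr 1
    simp only [map_div₀, _root_.map_mul, Complex.conj_I, Complex.conj_ofReal,
      Complex.conj_ofNat, Complex.conj_natCast]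
    ring
  have hωd : ω ^ d = 1 := by
    rw [hωdef, ← Complex.exp_nat_mul, mul_div_cancel₀]
    · exact Complex.exp_two_pi_mul_I
    · exact_mod_cast hd
  have hprim := Complex.isPrimitiveRoot_exp d hd
  by_cases hjk : j = k
  · subst hjk
    simp only [if_pos rfl, hstar, inv_pow, mul_inv_cancel₀ (pow_ne_zero _ hω0), one_pow]
    simp [Finset.card_univ]
  · rw [if_neg hjk]
    set ζ := ω ^ (j : ℕ) * (star ω) ^ (k : ℕ) with hζ
    have hζd : ζ ^ d = 1 := by
      rw [hζ, mul_pow, ← pow_mul, ← pow_mul, mul_comm (j : ℕ) d, mul_comm (k : ℕ) d,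
        pow_mul, pow_mul, hωd, hstar, inv_pow, hωd]
      simp
    have hζ1 : ζ ≠ 1 := by
      intro h
      apply hjk
      have : ω ^ (j : ℕ) = ω ^ (k : ℕ) := by
        have := congrArg (· * ω ^ (k : ℕ)) h
        simpa [hζ, hstar, inv_pow, mul_assoc,
          inv_mul_cancel₀ (pow_ne_zero (k : ℕ) hω0)] using this
      exact Fin.ext (hprim.pow_inj j.isLt k.isLt this)
    rw [Fin.sum_univ_eq_sum_range (fun a => ζ ^ a), geom_sum_eq hζ1, hζd, sub_self, zero_div]

/-- If `{|v_x⟩}` is an orthonormal basis with `|⟨j|v_i⟩| = 1/d` for `i = j` and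
`√(d+1)/d` for `i ≠ j`, then for each `x` the operators `{M_x^a}_{a=0}^d` form a
valid POVM. -/
theorem povmM_isPOVM (d : ℕ) (hd : 2 ≤ d) (v : Fin d → Fin d → ℂ)
    (horth : ∀ i j, star (v i) ⬝ᵥ v j = if i = j then 1 else 0)
    (hovl : ∀ i j : Fin d,
      ‖v i j‖ = if i = j then (1 / d : ℝ) else Real.sqrt (d + 1) / d)
    (x : Fin d) :
    (∀ a : Fin (d + 1), (povmM d v x a).PosSemidef) ∧
      ∑ a : Fin (d + 1), povmM d v x a = 1 := by
  have hd0 : d ≠ 0 := by omega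
  have hdC : (d : ℂ) ≠ 0 := Nat.cast_ne_zero.mpr hd0
  have hdC1 : (d : ℂ) + 1 ≠ 0 := by
    intro h
    have : ((d + 1 : ℕ) : ℂ) = 0 := by push_cast; linear_combination h
    exact Nat.cast_ne_zero.mpr (Nat.succ_ne_zero d) this
  have hc : (0 : ℂ) ≤ (d : ℂ) / ((d : ℂ) + 1) := by
    have h : ((d : ℂ) / ((d : ℂ) + 1)) = (((d : ℝ) / ((d : ℝ) + 1) : ℝ) : ℂ) := by
      push_cast; ring
    rw [h, Complex.zero_le_real]
    positivity
  constructor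
  · intro a
    apply aux_psd_smul _ hc
    rw [vecMulVec_eq Unit, ← conjTranspose_replicateCol]
    exact posSemidef_self_mul_conjTranspose _
  · ext j k
    set ω := Complex.exp (2 * Real.pi * Complex.I / d) with hωdef
    rw [Matrix.sum_apply]
    simp only [povmM, Matrix.smul_apply, vecMulVec_apply, Pi.star_apply, smul_eq_mul]
    rw [Fin.sum_univ_castSucc]
    simp only [_root_.eta, Fin.coe_castSucc, Fin.is_lt, if_true, Fin.val_last, lt_irrefl, if_false,
      clockZ, Matrix.diagonal_pow, Matrix.mulVec_diagonal, Pi.pow_apply, star_mul', star_pow]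
    have hsum : (∑ a : Fin d,
        (d : ℂ) / (↑d + 1) * ((ω ^ (j : ℕ)) ^ (a : ℕ) * v x j *
          ((star ω ^ (k : ℕ)) ^ (a : ℕ) * star (v x k)))) =
        (d : ℂ) / (↑d + 1) * (v x j * star (v x k)) *
          (if j = k then (d : ℂ) else 0) := by
      rw [← aux_root_sum d hd0 j k, Finset.mul_sum]
      apply Finset.sum_congr rfl
      intro a _
      rw [mul_pow, ← pow_mul, ← pow_mul, mul_comm (j : ℕ) (a : ℕ), mul_comm (k : ℕ) (a : ℕ),
        pow_mul, pow_mul]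
      ring
    rw [hsum, Matrix.one_apply]
    by_cases hjk : j = k
    · subst hjk
      rw [if_pos rfl, if_pos rfl]
      have hvv : v x j * star (v x j) = ((‖v x j‖ ^ 2 : ℝ) : ℂ) := by
        rw [Complex.star_def, Complex.mul_conj, Complex.sq_norm]
      rw [hvv, hovl x j]
      by_cases hxj : x = j
      · rw [if_pos hxj]
        simp only [ket, if_pos hxj.symm, star_one, mul_one]
        push_cast
        field_simp
        ring
      · rw [if_neg hxj]
        have hne : j ≠ x := fun h => hxj h.symm
        simp only [ket, if_neg hne, star_zero, mul_zero, add_zero]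
        have hsq : (Real.sqrt (d + 1) / d) ^ 2 = ((d : ℝ) + 1) / (d : ℝ) ^ 2 := by
          rw [div_pow, Real.sq_sqrt (by positivity)]
        rw [hsq]
        push_cast
        field_simp
    · rw [if_neg hjk, if_neg hjk, mul_zero, zero_add]
      have : ket d x j * star (ket d x k) = 0 := by
        by_cases hjx : j = x
        · have hkx : k ≠ x := fun h => hjk (hjx.trans h.symm)
          simp [ket, hkx]
        · simp [ket, hjx]
      rw [this, mul_zero]
end
end

section
/- Let {|v_i⟩}_{i=0}^{d-1} be an orthonormal basis of ℂ^d satisfying |⟨v_i|U_{k,l}|v_i⟩| ≠ 0 for all i and all k,l ∈ {0,...,d-1}, where U_{k,l} = X^k Z^l. Then there exists a pair (k,l) ≠ (0,0) such that |⟨v_j|U_{k,l}|v_i⟩| < 1 for all i, j. -/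
open Matrix Complex BigOperators

noncomputable section

/-- The shift matrix `X = ∑ᵢ |i+1 mod d⟩⟨i|`. -/
def shiftX (d : ℕ) [NeZero d] : Matrix (Fin d) (Fin d) ℂ :=
  Matrix.of fun i j : Fin d => if i = j + 1 then 1 else 0

/-- The generalized Pauli unitary `U_{k,l} = Xᵏ Zˡ`. -/
def pauliU (d : ℕ) [NeZero d] (k l : ℕ) : Matrix (Fin d) (Fin d) ℂ :=
  shiftX d ^ k * clockZ d ^ l

/-- If an orthonormal basis `{|v_i⟩}` satisfies `|⟨v_i|U_{k,l}|v_i⟩| ≠ 0` for all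
`i, k, l`, then there is a pair `(k,l) ≠ (0,0)` with `|⟨v_j|U_{k,l}|v_i⟩| < 1`
for all `i, j`. -/
theorem ic_strict_overlap (d : ℕ) [NeZero d] (hd : 2 ≤ d)
    (v : Fin d → Fin d → ℂ)
    (horth : ∀ i j, star (v i) ⬝ᵥ v j = if i = j then 1 else 0)
    (hic : ∀ (i : Fin d) (k l : Fin d),
      ‖star (v i) ⬝ᵥ (pauliU d k l *ᵥ v i)‖ ≠ 0) :
    ∃ k l : Fin d, ¬(k = 0 ∧ l = 0) ∧ ∀ i j : Fin d,
      ‖star (v j) ⬝ᵥ (pauliU d k l *ᵥ v i)‖ < 1 := by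
  classical
  have hd1 : 1 < d := hd
  set ω : ℂ := Complex.exp (2 * Real.pi * Complex.I / d) with hω
  have hprim : IsPrimitiveRoot ω d := Complex.isPrimitiveRoot_exp d (NeZero.ne d)
  have hωabs : ‖ω‖ = 1 := by
    rw [hω]
    have h2 : (2 * (Real.pi:ℂ) * Complex.I / d) = ((2 * Real.pi / d : ℝ) : ℂ) * Complex.I := by
      push_cast; ring
    rw [h2, Complex.norm_exp_ofReal_mul_I]
  -- the clock matrix acts diagonally
  have hZapp : ∀ (x : Fin d → ℂ) (m : Fin d), (clockZ d *ᵥ x) m = ω ^ (m : ℕ) * x m := by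
    intro x m
    simp [clockZ, mulVec_diagonal, hω]
  -- shift matrix action
  have hXapp : ∀ (x : Fin d → ℂ) (m : Fin d), (shiftX d *ᵥ x) m = x (m - 1) := by
    intro x m
    have hiff : ∀ j : Fin d, (m = j + 1) ↔ (j = m - 1) := by
      intro j; constructor
      · intro h; rw [h]; simp
      · intro h; rw [h]; simp
    simp only [shiftX, mulVec, dotProduct, Matrix.of_apply, hiff, ite_mul, one_mul, zero_mul]
    simp
  -- special Pauli unitaries
  have hP01 : pauliU d ((0 : Fin d) : ℕ) ((⟨1, hd1⟩ : Fin d) : ℕ) = clockZ d := by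
    simp [pauliU]
  have hP10 : pauliU d ((⟨1, hd1⟩ : Fin d) : ℕ) ((0 : Fin d) : ℕ) = shiftX d := by
    simp [pauliU]
  -- move to EuclideanSpace
  let f : (Fin d → ℂ) → EuclideanSpace ℂ (Fin d) := fun x => (WithLp.equiv 2 (Fin d → ℂ)).symm x
  have hinner : ∀ x y : Fin d → ℂ, (inner ℂ (f x) (f y) : ℂ) = star x ⬝ᵥ y := by
    intro x y
    simp [f, PiLp.inner_apply, dotProduct, RCLike.inner_apply, mul_comm]
  have hON : Orthonormal ℂ (fun i => f (v i)) := by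
    rw [orthonormal_iff_ite]
    intro i j; rw [hinner]; exact horth i j
  have hωconj : (starRingEnd ℂ) ω * ω = 1 := by
    have h1 := Complex.normSq_eq_norm_sq ω
    rw [hωabs] at h1
    rw [← Complex.normSq_eq_conj_mul_self, h1]
    norm_num
  -- Z preserves the dot product with itself
  have hZnorm : ∀ x : Fin d → ℂ,
      star (clockZ d *ᵥ x) ⬝ᵥ (clockZ d *ᵥ x) = star x ⬝ᵥ x := by
    intro x
    simp only [dotProduct, Pi.star_apply, hZapp]
    refine Finset.sum_congr rfl fun m _ => ?_
    have h1 : (starRingEnd ℂ) (ω ^ (m : ℕ)) * ω ^ (m : ℕ) = 1 := by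
      rw [map_pow, ← mul_pow, hωconj, one_pow]
    calc star (ω ^ (m : ℕ) * x m) * (ω ^ (m : ℕ) * x m)
        = ((starRingEnd ℂ) (ω ^ (m : ℕ)) * ω ^ (m : ℕ)) * (star (x m) * x m) := by
          simp only [star_mul', Complex.star_def]; ring
      _ = star (x m) * x m := by rw [h1, one_mul]
  have hvnorm : ∀ i, ‖f (v i)‖ = 1 := hON.1
  have selfdot_norm : ∀ x : Fin d → ℂ, star x ⬝ᵥ x = 1 → ‖f x‖ = 1 := by
    intro x hx
    have h1 : (inner ℂ (f x) (f x) : ℂ) = 1 := by rw [hinner]; exact hx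
    have h2 : (inner ℂ (f x) (f x) : ℂ) = (‖f x‖ : ℂ) ^ 2 := by
      exact_mod_cast inner_self_eq_norm_sq_to_K (𝕜 := ℂ) (f x)
    rw [h2] at h1
    have h3 : (‖f x‖ : ℝ) ^ 2 = 1 := by exact_mod_cast h1
    nlinarith [norm_nonneg (f x)]
  refine ⟨0, ⟨1, hd1⟩, ?_, ?_⟩
  · rintro ⟨-, h⟩
    have := congrArg Fin.val h
    simp at this
  · intro i j
    rw [hP01]
    set y : Fin d → ℂ := clockZ d *ᵥ v i with hy
    have hyn : ‖f y‖ = 1 := by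
      apply selfdot_norm
      rw [hy, hZnorm]
      simpa using horth i i
    have hii : ‖star (v i) ⬝ᵥ y‖ ≠ 0 := by
      have h := hic i 0 ⟨1, hd1⟩
      rwa [hP01] at h
    by_cases hij : j = i
    · -- diagonal case
      subst hij
      by_contra hcon
      push_neg at hcon
      have hle : ‖star (v j) ⬝ᵥ y‖ ≤ 1 := by
        have h := norm_inner_le_norm (𝕜 := ℂ) (f (v j)) (f y)
        rw [hinner, hvnorm, hyn] at h
        simpa using h
      have heq : ‖(inner ℂ (f (v j)) (f y) : ℂ)‖ = ‖f (v j)‖ * ‖f y‖ := by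
        rw [hinner, hvnorm, hyn]
        linarith
      have hvne : f (v j) ≠ 0 := by
        intro h
        have h2 := hvnorm j; rw [h] at h2; simp at h2
      have hyne : f y ≠ 0 := by
        intro h; rw [h] at hyn; simp at hyn
      obtain ⟨r, hr0, hry⟩ := (norm_inner_eq_norm_iff hvne hyne).mp heq
      -- componentwise eigenvector equation
      have hry' : y = r • v j := by
        have := congrArg (WithLp.equiv 2 (Fin d → ℂ)) hry
        simpa [f] using this
      have heig : ∀ m : Fin d, ω ^ (m : ℕ) * v j m = r * v j m := by
        intro m
        simpa [hy, hZapp, Pi.smul_apply, smul_eq_mul] using congrFun hry' m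
      -- v j is supported on a single coordinate
      obtain ⟨m0, hm0⟩ : ∃ m0, v j m0 ≠ 0 := by
        by_contra hall
        push_neg at hall
        have := horth j j
        simp [dotProduct, hall] at this
      have hsupp : ∀ m : Fin d, m ≠ m0 → v j m = 0 := by
        intro m hm
        by_contra hvm
        have h1 : ω ^ (m : ℕ) = r := by
          have := heig m
          exact mul_right_cancel₀ hvm this
        have h2 : ω ^ (m0 : ℕ) = r := by
          have := heig m0
          exact mul_right_cancel₀ hm0 this
        have := hprim.pow_inj m.isLt m0.isLt (h1.trans h2.symm)
        exact hm (Fin.ext this)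
      -- then ⟨v j | X | v j⟩ = 0, contradicting hic
      have hX0 : star (v j) ⬝ᵥ (shiftX d *ᵥ v j) = 0 := by
        apply Finset.sum_eq_zero
        intro m _
        simp only [Pi.star_apply, hXapp]
        by_cases hm : m = m0
        · subst hm
          have hne : m - 1 ≠ m := by
            intro hcontra
            have h1 : (1 : Fin d) = 0 := sub_eq_self.mp hcontra
            have h2 := congrArg Fin.val h1
            rw [Fin.val_one'] at h2
            simp [Nat.mod_eq_of_lt hd1] at h2
          rw [hsupp _ hne, mul_zero]
        · rw [hsupp _ hm]
          simp
      have := hic j ⟨1, hd1⟩ 0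
      rw [hP10, hX0] at this
      simp at this
    · -- off-diagonal: Bessel over {i, j}
      have hB := hON.sum_inner_products_le (s := ({i, j} : Finset (Fin d))) (f y)
      rw [Finset.sum_pair (Ne.symm hij)] at hB
      rw [hinner, hinner, hyn] at hB
      have h1 : (0:ℝ) < ‖(star (v i) ⬝ᵥ y : ℂ)‖ ^ 2 := by
        have : ‖(star (v i) ⬝ᵥ y : ℂ)‖ ≠ 0 := by
          exact hii
        positivity
      have h2 : ‖(star (v j) ⬝ᵥ y : ℂ)‖ ^ 2 < 1 := by nlinarith
      nlinarith [norm_nonneg (star (v j) ⬝ᵥ y)]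
end
end

section
/- There do not exist three orthonormal bases {|v_x^a⟩}_{a=0}^{2}, x = 0,1,2, of ℂ³ satisfying both: (1) ⟨v_x^a|v_{x'}^a⟩ = δ_{x,x'} for all a, x, x' (i.e., for each fixed a, {|v_x^a⟩}_x is also orthonormal), and (2) there exist a, a' with a ≠ a' such that |⟨v_x^a|v_{x'}^{a'}⟩| < 1 for all x, x'. -/
open Matrix Complex BigOperators

/-- There are no three orthonormal bases `{|v_x^a⟩}_a` (`x = 0,1,2`) of `ℂ³`
such that (1) for each `a`, `⟨v_x^a|v_{x'}^a⟩ = δ_{x,x'}`, and (2) for some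
`a ≠ a'` all overlaps `|⟨v_x^a|v_{x'}^{a'}⟩|` are strictly less than one. -/
theorem no_qutrit_bases :
    ¬ ∃ v : Fin 3 → Fin 3 → (Fin 3 → ℂ),
      (∀ x, ∀ a a' : Fin 3, star (v x a) ⬝ᵥ v x a' = if a = a' then 1 else 0) ∧
      (∀ a, ∀ x x' : Fin 3, star (v x a) ⬝ᵥ v x' a = if x = x' then 1 else 0) ∧
      (∃ a a' : Fin 3, a ≠ a' ∧
        ∀ x x' : Fin 3, ‖star (v x a) ⬝ᵥ v x' a'‖ < 1) := by
  rintro ⟨v, h1, h2, a, a', hne, h3⟩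
  set A : Matrix (Fin 3) (Fin 3) ℂ := Matrix.of fun i x => v x a i with hA
  set B : Matrix (Fin 3) (Fin 3) ℂ := Matrix.of fun i x => v x a' i with hB
  have hAA : Aᴴ * A = 1 := by
    ext x x'
    have := h2 a x x'
    simpa [Matrix.mul_apply, Matrix.conjTranspose_apply, hA, Matrix.one_apply,
      dotProduct] using this
  have hBB : Bᴴ * B = 1 := by
    ext x x'
    have := h2 a' x x'
    simpa [Matrix.mul_apply, Matrix.conjTranspose_apply, hB, Matrix.one_apply,
      dotProduct] using this
  have hAA' : A * Aᴴ = 1 := mul_eq_one_comm.mp hAA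
  have hBB' : B * Bᴴ = 1 := mul_eq_one_comm.mp hBB
  set M : Matrix (Fin 3) (Fin 3) ℂ := Aᴴ * B with hM
  have hMval : ∀ x x', M x x' = star (v x a) ⬝ᵥ v x' a' := by
    intro x x'
    simp [hM, Matrix.mul_apply, Matrix.conjTranspose_apply, hA, hB, dotProduct]
  have hdiag : ∀ x, M x x = 0 := by
    intro x
    rw [hMval]
    simpa [hne] using h1 x a a'
  have hMM : M * Mᴴ = 1 := by
    rw [hM, Matrix.conjTranspose_mul, Matrix.conjTranspose_conjTranspose,
      Matrix.mul_assoc, ← Matrix.mul_assoc B, hBB', Matrix.one_mul, hAA]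
  -- row orthogonality 0,1
  have h01 : M 0 2 * star (M 1 2) = 0 := by
    have := congrFun (congrFun hMM 0) 1
    simp [Matrix.mul_apply, Matrix.conjTranspose_apply, Fin.sum_univ_three,
      Matrix.one_apply, hdiag 0, hdiag 1] at this
    simpa using this
  have row0 : M 0 1 * star (M 0 1) + M 0 2 * star (M 0 2) = 1 := by
    have := congrFun (congrFun hMM 0) 0
    simpa [Matrix.mul_apply, Matrix.conjTranspose_apply, Fin.sum_univ_three,
      Matrix.one_apply, hdiag 0] using this
  have row1 : M 1 0 * star (M 1 0) + M 1 2 * star (M 1 2) = 1 := by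
    have := congrFun (congrFun hMM 1) 1
    simpa [Matrix.mul_apply, Matrix.conjTranspose_apply, Fin.sum_univ_three,
      Matrix.one_apply, hdiag 1] using this
  have habs : ∀ x x', ‖M x x'‖ < 1 := by
    intro x x'; rw [hMval]; exact h3 x x'
  have key : ∀ z : ℂ, z * star z = 1 → ‖z‖ = 1 := by
    intro z hz
    have : (Complex.normSq z : ℂ) = 1 := by rw [← Complex.mul_conj]; exact hz
    have h2 : Complex.normSq z = 1 := by exact_mod_cast this
    have := Complex.sq_norm z
    nlinarith [norm_nonneg z]
  rcases mul_eq_zero.mp h01 with h | h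
  · have : M 0 1 * star (M 0 1) = 1 := by
      rw [h] at row0; simpa using row0
    exact absurd (key _ this) (ne_of_lt (habs 0 1))
  · have h' : M 1 2 = 0 := by simpa using star_eq_zero.mp h
    have : M 1 0 * star (M 1 0) = 1 := by
      rw [h'] at row1; simpa using row1
    exact absurd (key _ this) (ne_of_lt (habs 1 0))
end
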